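/- Resolving blocking pairs by promotion preserves A-perfectness and yields stability: the matching output by the following procedure is A-perfect and stable (envy-free). Initialize M by matching each agent a to p*_a (its cheapest listed program, ties by preference). Then for each program p (in arbitrary order), scanning agents in reverse order of p's preference list, whenever an agent a not in M(p) prefers p to M(a) and some a' ∈ M(p) is less preferred by p than a, reassign a to p. The final M is A-perfect and admits no blocking pair. -/

import Mathlib

open Classical in
/-- One step of the promotion procedure: if agent `a` (not currently in `M(p)`) prefers
`p` to its current assignment and some agent currently matched to `p` is less preferred
by `p` than `a`, reassign `a` to `p`; otherwise leave `M` unchanged. -/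
noncomputable def promote {A P : Type*} [DecidableEq A] [DecidableEq P]
    (list : A → Finset P) (rankA : A → P → ℕ) (rankP : P → A → ℕ)
    (p : P) (M : A → P) (a : A) : A → P :=
  if p ∈ list a ∧ M a ≠ p ∧ rankA a p < rankA a (M a) ∧
      (∃ a', M a' = p ∧ rankP p a < rankP p a')
  then Function.update M a p else M

/-- Scan the agents (given in `rev`, the reverse of `p`'s preference list) for program `p`. -/
noncomputable def scanProgram {A P : Type*} [DecidableEq A] [DecidableEq P]
    (list : A → Finset P) (rankA : A → P → ℕ) (rankP : P → A → ℕ)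
    (p : P) (rev : List A) (M : A → P) : A → P :=
  rev.foldl (promote list rankA rankP p) M

/-- The full procedure: starting from `M₀`, process every program `p` in the order `ps`,
scanning agents in reverse order of `p`'s preference list. -/
noncomputable def runAlgo {A P : Type*} [DecidableEq A] [DecidableEq P]
    (list : A → Finset P) (rankA : A → P → ℕ) (rankP : P → A → ℕ)
    (ps : List P) (rev : P → List A) (M₀ : A → P) : A → P :=
  ps.foldl (fun M p => scanProgram list rankA rankP p (rev p) M) M₀

section Aux

variable {A P : Type*} [DecidableEq A] [DecidableEq P]
variable (list : A → Finset P) (rankA : A → P → ℕ) (rankP : P → A → ℕ)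

lemma promote_cases (p : P) (M : A → P) (a b : A) :
    promote list rankA rankP p M a b = M b ∨
    (b = a ∧ promote list rankA rankP p M a b = p ∧
      rankA b p < rankA b (M b) ∧ p ∈ list b) := by
  unfold promote
  split
  · rename_i h
    by_cases hb : b = a
    · subst hb
      exact Or.inr ⟨rfl, Function.update_self _ _ _, h.2.2.1, h.1⟩
    · exact Or.inl (Function.update_of_ne hb _ _)
  · exact Or.inl rfl

lemma promote_mono (p : P) (M : A → P) (a b : A) :
    rankA b (promote list rankA rankP p M a b) ≤ rankA b (M b) := by
  rcases promote_cases list rankA rankP p M a b with h | ⟨_, h1, h2, _⟩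
  · rw [h]
  · rw [h1]; exact h2.le

lemma scan_mono (p : P) : ∀ (l : List A) (M : A → P) (b : A),
    rankA b (scanProgram list rankA rankP p l M b) ≤ rankA b (M b) := by
  intro l
  induction l with
  | nil => intro M b; exact le_refl _
  | cons x t ih =>
      intro M b
      have h1 := ih (promote list rankA rankP p M x) b
      have h2 := promote_mono list rankA rankP p M x b
      exact le_trans h1 h2

lemma scan_cases (p : P) : ∀ (l : List A) (M : A → P) (b : A),
    scanProgram list rankA rankP p l M b = M b ∨
    (scanProgram list rankA rankP p l M b = p ∧ p ∈ list b) := by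
  intro l
  induction l with
  | nil => intro M b; exact Or.inl rfl
  | cons x t ih =>
      intro M b
      rcases ih (promote list rankA rankP p M x) b with h | h
      · rcases promote_cases list rankA rankP p M x b with h' | ⟨_, h1, _, h3⟩
        · exact Or.inl (h.trans h')
        · exact Or.inr ⟨h.trans h1, h3⟩
      · exact Or.inr h

/-- The invariant: agent `a` does not form a blocking pair with `p` in `M`. -/
def InvBP (p : P) (a : A) (M : A → P) : Prop :=
  p ∈ list a → rankA a p < rankA a (M a) → ∀ a', M a' = p → rankP p a' ≤ rankP p a

lemma promote_Inv (p : P) (a b : A) (hb : rankP p b < rankP p a) (M : A → P)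
    (h : InvBP list rankA rankP p a M) :
    InvBP list rankA rankP p a (promote list rankA rankP p M b) := by
  intro h1 h2 a' ha'
  have hmon := promote_mono list rankA rankP p M b a
  have h2' : rankA a p < rankA a (M a) := lt_of_lt_of_le h2 hmon
  rcases promote_cases list rankA rankP p M b a' with h' | ⟨he, _, _, _⟩
  · exact h h1 h2' a' (h' ▸ ha')
  · subst he; exact hb.le

lemma scan_Inv_suffix (p : P) (a : A) : ∀ (l : List A),
    (∀ x ∈ l, rankP p x < rankP p a) → ∀ (M : A → P),
    InvBP list rankA rankP p a M →
    InvBP list rankA rankP p a (scanProgram list rankA rankP p l M) := by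
  intro l
  induction l with
  | nil => intro _ M h; exact h
  | cons x t ih =>
      intro hl M h
      exact ih (fun y hy => hl y (List.mem_cons_of_mem x hy))
        (promote list rankA rankP p M x)
        (promote_Inv list rankA rankP p a x (hl x (List.mem_cons_self : x ∈ x :: t)) M h)

lemma promote_Inv_head (p : P) (b : A) (M : A → P) :
    InvBP list rankA rankP p b (promote list rankA rankP p M b) := by
  unfold promote
  split
  · intro _ h2 _ _
    rw [Function.update_self] at h2
    exact absurd h2 (lt_irrefl _)
  · rename_i hcond
    intro h1 h2 a' ha'
    by_contra hcon
    push_neg at hcon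
    have hne : M b ≠ p := by
      intro he
      rw [he] at h2
      exact absurd h2 (lt_irrefl _)
    exact hcond ⟨h1, hne, h2, a', ha', hcon⟩

lemma scan_Inv_all (p : P) : ∀ (l : List A),
    l.Pairwise (fun x y => rankP p y < rankP p x) → ∀ (M : A → P) (a : A), a ∈ l →
    InvBP list rankA rankP p a (scanProgram list rankA rankP p l M) := by
  intro l
  induction l with
  | nil => intro _ M a ha; exact absurd ha List.not_mem_nil
  | cons x t ih =>
      intro hs M a ha
      rcases List.mem_cons.mp ha with he | ht
      · subst he
        exact scan_Inv_suffix list rankA rankP p a t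
          (fun y hy => (List.pairwise_cons.mp hs).1 y hy)
          (promote list rankA rankP p M a)
          (promote_Inv_head list rankA rankP p a M)
      · exact ih (List.pairwise_cons.mp hs).2 (promote list rankA rankP p M x) a ht

/-- No blocking pair with `p` in `M`. -/
def NoBlock (p : P) (M : A → P) : Prop :=
  ∀ a, p ∈ list a → rankA a p < rankA a (M a) → ∀ a', M a' = p → rankP p a' ≤ rankP p a

lemma scan_noBlock (p : P) (l : List A)
    (hall : ∀ a : A, a ∈ l) (hs : l.Pairwise (fun x y => rankP p y < rankP p x))
    (M : A → P) : NoBlock list rankA rankP p (scanProgram list rankA rankP p l M) := by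
  intro a h1 h2 a' ha'
  exact scan_Inv_all list rankA rankP p l hs M a (hall a) h1 h2 a' ha'

lemma scan_preserve (p q : P) (hne : q ≠ p) (l : List A) (M : A → P)
    (h : NoBlock list rankA rankP p M) :
    NoBlock list rankA rankP p (scanProgram list rankA rankP q l M) := by
  intro a h1 h2 a' ha'
  have h2' : rankA a p < rankA a (M a) :=
    lt_of_lt_of_le h2 (scan_mono list rankA rankP q l M a)
  rcases scan_cases list rankA rankP q l M a' with h' | ⟨h', _⟩
  · exact h a h1 h2' a' (h' ▸ ha')
  · exact absurd (h' ▸ ha') hne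

lemma run_preserve (p : P) (rev : P → List A) : ∀ (t : List P), p ∉ t → ∀ (M : A → P),
    NoBlock list rankA rankP p M →
    NoBlock list rankA rankP p (runAlgo list rankA rankP t rev M) := by
  intro t
  induction t with
  | nil => intro _ M h; exact h
  | cons q t ih =>
      intro hnt M h
      have hq : q ≠ p := fun he => hnt (he ▸ (List.mem_cons_self : q ∈ q :: t))
      exact ih (fun hm => hnt (List.mem_cons_of_mem q hm)) _
        (scan_preserve list rankA rankP p q hq (rev q) M h)

lemma run_noBlock (p : P) (rev : P → List A)
    (hall : ∀ a : A, a ∈ rev p)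
    (hs : (rev p).Pairwise (fun x y => rankP p y < rankP p x)) :
    ∀ (t : List P), p ∈ t → ∀ (M : A → P),
    NoBlock list rankA rankP p (runAlgo list rankA rankP t rev M) := by
  intro t
  induction t with
  | nil => intro h; exact absurd h List.not_mem_nil
  | cons q t ih =>
      intro hpt M
      by_cases hp : p ∈ t
      · exact ih hp _
      · have he : p = q := by
          rcases List.mem_cons.mp hpt with h | h
          · exact h
          · exact absurd h hp
        subst he
        exact run_preserve list rankA rankP p rev t hp _
          (scan_noBlock list rankA rankP p (rev p) hall hs M)

lemma run_mem (rev : P → List A) : ∀ (t : List P) (M : A → P),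
    (∀ b, M b ∈ list b) → ∀ b, runAlgo list rankA rankP t rev M b ∈ list b := by
  intro t
  induction t with
  | nil => intro M h b; exact h b
  | cons q t ih =>
      intro M h b
      refine ih _ (fun b' => ?_) b
      show scanProgram list rankA rankP q (rev q) M b' ∈ list b'
      rcases scan_cases list rankA rankP q (rev q) M b' with h' | ⟨h1, h2⟩
      · rw [h']; exact h b'
      · rw [h1]; exact h2

end Aux

/-- Resolving blocking pairs by promotion yields an A-perfect stable matching: start from
the matching assigning every agent `a` to `p*_a` (its cheapest listed program, ties broken
by `a`'s preference); for each program (in arbitrary order), scanning agents in reverse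
order of the program's preference list, promote any agent forming a blocking pair with it.
The final matching is A-perfect and admits no blocking pair. -/
theorem stmt12 {A P : Type*} [DecidableEq A] [DecidableEq P]
    (list : A → Finset P) (c : P → ℕ)
    (rankA : A → P → ℕ) (rankP : P → A → ℕ)
    (pstar : A → P)
    (hmem : ∀ a, pstar a ∈ list a)
    (hmin : ∀ a p, p ∈ list a → c (pstar a) ≤ c p)
    (htie : ∀ a p, p ∈ list a → c p = c (pstar a) → rankA a (pstar a) ≤ rankA a p)
    (ps : List P) (hps : ∀ p : P, p ∈ ps)               -- all programs, arbitrary order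
    (rev : P → List A)
    (hrevall : ∀ p a, a ∈ rev p)                        -- all agents scanned
    (hrevsorted : ∀ p, (rev p).Pairwise (fun x y => rankP p y < rankP p x)) :
    -- reverse preference order: worse agents first
    (∀ a, (runAlgo list rankA rankP ps rev (fun a => pstar a)) a ∈ list a) ∧
    (¬ ∃ a p, p ∈ list a ∧
      rankA a p < rankA a ((runAlgo list rankA rankP ps rev (fun a => pstar a)) a) ∧
      ∃ a', (runAlgo list rankA rankP ps rev (fun a => pstar a)) a' = p ∧
        rankP p a < rankP p a') := by
  constructor
  · exact run_mem list rankA rankP rev ps (fun a => pstar a) hmem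
  · rintro ⟨a, p, h1, h2, a', ha', hr⟩
    exact absurd (run_noBlock list rankA rankP p rev (hrevall p) (hrevsorted p)
      ps (hps p) (fun a => pstar a) a h1 h2 a' ha') (not_le.mpr hr)
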